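/- Let W(z) = 9√π · (Γ(z + 1/2)/Γ(z + 1)) · (z - 1)/(z(2z - 1)(2z - 3)). Then there exist constants c, C > 0 such that c|z|^{-5/2} ≤ |W(z)| ≤ C|z|^{-5/2} for all complex z with Re z > 7/4. -/

import Mathlib

open Complex Real

/-- The Laplace transform `W` of the weight `w`, in closed form. -/
noncomputable def W (z : ℂ) : ℂ :=
  9 * Real.sqrt π * (Complex.Gamma (z + 1/2) / Complex.Gamma (z + 1))
    * ((z - 1) / (z * (2*z - 1) * (2*z - 3)))

open Filter Finset Topology

noncomputable def uu (z : ℂ) (j : ℕ) : ℝ := (z.re + 1/2 + j)^2 + z.im^2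
noncomputable def vv (z : ℂ) (j : ℕ) : ℝ := (z.re + 1 + j)^2 + z.im^2

lemma uu_pos {z : ℂ} (hz : 7/4 < z.re) (j : ℕ) : 0 < uu z j := by
  have hj : (0:ℝ) ≤ j := Nat.cast_nonneg j
  have h : 0 < (z.re + 1/2 + j)^2 := by nlinarith
  simp only [uu]; nlinarith [sq_nonneg z.im]

lemma vv_ge {z : ℂ} (hz : 7/4 < z.re) (j : ℕ) : 7 ≤ vv z j := by
  have hj : (0:ℝ) ≤ j := Nat.cast_nonneg j
  simp only [vv]
  nlinarith [sq_nonneg z.im]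

lemma vv_pos {z : ℂ} (hz : 7/4 < z.re) (j : ℕ) : 0 < vv z j :=
  lt_of_lt_of_le (by norm_num) (vv_ge hz j)

lemma key_alg (z : ℂ) (j : ℕ) :
    uu z j * uu z (j+1) = (vv z j)^2 + (vv z j)/2 + 1/16 - (z.re + 1 + j)^2 := by
  simp only [uu, vv]
  push_cast
  ring

lemma factor_bounds {z : ℂ} (hz : 7/4 < z.re) (j : ℕ) :
    (1 - (vv z j)⁻¹) * (uu z j * uu z (j+1)) ≤ (vv z j)^2 ∧
    (vv z j)^2 ≤ (1 + 2*(vv z j)⁻¹) * (uu z j * uu z (j+1)) := by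
  have hv := vv_ge hz j
  have hv0 : 0 < vv z j := by linarith
  have hb2 : (z.re + 1 + j)^2 ≤ vv z j := by
    simp only [vv]; nlinarith [sq_nonneg z.im]
  have hb0 : 0 ≤ (z.re + 1 + j)^2 := sq_nonneg _
  have key := key_alg z j
  have h1 : (1 - (vv z j)⁻¹) = (vv z j - 1)/(vv z j) := by field_simp
  have h2 : (1 + 2*(vv z j)⁻¹) = (vv z j + 2)/(vv z j) := by field_simp
  constructor
  · rw [h1, div_mul_eq_mul_div, div_le_iff₀ hv0]
    nlinarith
  · rw [h2, div_mul_eq_mul_div, le_div_iff₀ hv0]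
    nlinarith

lemma exp_aux {t : ℝ} (h0 : 0 ≤ t) (h : t ≤ 1/2) : Real.exp (-(2*t)) ≤ 1 - t := by
  have h1 : 2*t + 1 ≤ Real.exp (2*t) := Real.add_one_le_exp _
  have h4 : Real.exp (-(2*t)) * Real.exp (2*t) = 1 := by rw [← Real.exp_add]; norm_num
  have hp := Real.exp_pos (-(2*t))
  nlinarith [mul_le_mul_of_nonneg_left h1 hp.le]

lemma sum_inv_vv_le {z : ℂ} (hz : 7/4 < z.re) (n : ℕ) :
    ∑ j ∈ range n, (vv z j)⁻¹ ≤ 4/7 := by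
  have step : ∀ j : ℕ, (vv z j)⁻¹ ≤ ((j:ℝ)+7/4)⁻¹ - (((j:ℝ)+1)+7/4)⁻¹ := by
    intro j
    have hj : (0:ℝ) ≤ j := Nat.cast_nonneg j
    have hpos : (0:ℝ) < ((j:ℝ)+7/4) * ((j:ℝ)+11/4) := by nlinarith
    have hle : ((j:ℝ)+7/4) * ((j:ℝ)+11/4) ≤ vv z j := by
      simp only [vv]; nlinarith [sq_nonneg z.im]
    have h1 : (vv z j)⁻¹ ≤ (((j:ℝ)+7/4) * ((j:ℝ)+11/4))⁻¹ :=
      inv_anti₀ hpos hle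
    have h2 : (((j:ℝ)+7/4) * ((j:ℝ)+11/4))⁻¹ = ((j:ℝ)+7/4)⁻¹ - (((j:ℝ)+1)+7/4)⁻¹ := by
      have h3 : ((j:ℝ)+7/4) ≠ 0 := by positivity
      have h4 : ((j:ℝ)+11/4) ≠ 0 := by positivity
      field_simp
      ring
    linarith
  calc ∑ j ∈ range n, (vv z j)⁻¹
      ≤ ∑ j ∈ range n, (((j:ℝ)+7/4)⁻¹ - (((j:ℝ)+1)+7/4)⁻¹) :=
        Finset.sum_le_sum fun j _ => step j
    _ = ((0:ℝ)+7/4)⁻¹ - ((n:ℝ)+7/4)⁻¹ := by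
        have := Finset.sum_range_sub' (fun j : ℕ => ((j:ℝ)+7/4)⁻¹) n
        simpa [Nat.cast_add, Nat.cast_one] using this
    _ ≤ 4/7 := by
        have : (0:ℝ) ≤ ((n:ℝ)+7/4)⁻¹ := by positivity
        norm_num
        linarith

lemma exp_two_le : Real.exp 2 ≤ 8 := by
  have h := Real.exp_one_lt_d9
  have h2 : Real.exp 2 = Real.exp 1 * Real.exp 1 := by rw [← Real.exp_add]; norm_num
  nlinarith [Real.exp_pos 1]

lemma prod_bounds {z : ℂ} (hz : 7/4 < z.re) (n : ℕ) :
    (1/8 : ℝ) ≤ ∏ j ∈ range n, (vv z j)^2 / (uu z j * uu z (j+1)) ∧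
    ∏ j ∈ range n, (vv z j)^2 / (uu z j * uu z (j+1)) ≤ 8 := by
  have hP : ∀ j : ℕ, 0 < uu z j * uu z (j+1) := fun j => mul_pos (uu_pos hz j) (uu_pos hz (j+1))
  have hvinv : ∀ j : ℕ, (0:ℝ) ≤ (vv z j)⁻¹ ∧ (vv z j)⁻¹ ≤ 1/7 := by
    intro j
    constructor
    · exact inv_nonneg.2 (vv_pos hz j).le
    · rw [inv_le_comm₀ (vv_pos hz j) (by norm_num)]
      simpa using vv_ge hz j
  have hsum := sum_inv_vv_le hz n
  constructor
  · calc (1/8 : ℝ) ≤ Real.exp (-2) := by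
          rw [show (-2:ℝ) = -(2) from rfl, Real.exp_neg]
          rw [le_inv_comm₀ (by norm_num) (Real.exp_pos 2)]
          calc Real.exp 2 ≤ 8 := exp_two_le
            _ ≤ (1/8:ℝ)⁻¹ := by norm_num
      _ ≤ Real.exp (-(∑ j ∈ range n, 2*(vv z j)⁻¹)) := by
          apply Real.exp_le_exp.2
          have : ∑ j ∈ range n, 2*(vv z j)⁻¹ ≤ 2 := by
            rw [← Finset.mul_sum]; linarith
          linarith
      _ = ∏ j ∈ range n, Real.exp (-(2*(vv z j)⁻¹)) := by
          rw [← Real.exp_sum, ← Finset.sum_neg_distrib]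
      _ ≤ ∏ j ∈ range n, (1 - (vv z j)⁻¹) := by
          apply Finset.prod_le_prod (fun j _ => (Real.exp_pos _).le)
          intro j _
          exact exp_aux (hvinv j).1 (by linarith [(hvinv j).2])
      _ ≤ ∏ j ∈ range n, (vv z j)^2 / (uu z j * uu z (j+1)) := by
          apply Finset.prod_le_prod
          · intro j _; linarith [(hvinv j).2]
          · intro j _
            rw [le_div_iff₀ (hP j)]
            exact (factor_bounds hz j).1
  · calc ∏ j ∈ range n, (vv z j)^2 / (uu z j * uu z (j+1))
        ≤ ∏ j ∈ range n, (1 + 2*(vv z j)⁻¹) := by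
          apply Finset.prod_le_prod
          · intro j _; exact div_nonneg (sq_nonneg _) (hP j).le
          · intro j _
            rw [div_le_iff₀ (hP j)]
            exact (factor_bounds hz j).2
      _ ≤ ∏ j ∈ range n, Real.exp (2*(vv z j)⁻¹) := by
          apply Finset.prod_le_prod
          · intro j _; linarith [(hvinv j).1]
          · intro j _
            have := Real.add_one_le_exp (2*(vv z j)⁻¹)
            linarith
      _ = Real.exp (∑ j ∈ range n, 2*(vv z j)⁻¹) := (Real.exp_sum _ _).symm
      _ ≤ Real.exp 2 := by
          apply Real.exp_le_exp.2
          rw [← Finset.mul_sum]; linarith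
      _ ≤ 8 := exp_two_le

lemma ratio_eq {z : ℂ} (hz : 7/4 < z.re) {n : ℕ} (hn : n ≠ 0) :
    Complex.GammaSeq (z+1/2) n / Complex.GammaSeq (z+1) n
      = (n:ℂ)^(-(1/2):ℂ) * ∏ j ∈ range (n+1), ((z+1+j)/(z+1/2+j)) := by
  have hn0 : (n:ℂ) ≠ 0 := Nat.cast_ne_zero.2 hn
  have hA : (∏ j ∈ range (n+1), (z + 1/2 + j)) ≠ 0 := by
    apply Finset.prod_ne_zero_iff.2
    intro j _
    intro h
    have : (z + 1/2 + j).re = 0 := by rw [h]; simp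
    simp only [Complex.add_re, Complex.natCast_re, Complex.ofReal_re] at this
    have hj : (0:ℝ) ≤ j := Nat.cast_nonneg j
    norm_num at this
    linarith
  have hf : ((Nat.factorial n : ℕ):ℂ) ≠ 0 := Nat.cast_ne_zero.2 (Nat.factorial_ne_zero n)
  have hnb : (n:ℂ)^(z+1) ≠ 0 := by
    simp [Complex.cpow_eq_zero_iff, hn0]
  have hcp : (n:ℂ)^(z+1/2) = (n:ℂ)^(z+1) * (n:ℂ)^(-(1/2):ℂ) := by
    rw [← Complex.cpow_add _ _ hn0]; ring_nf
  have hXY : (n:ℂ)^(z+1/2) * (Nat.factorial n) / ((n:ℂ)^(z+1) * (Nat.factorial n))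
      = (n:ℂ)^(-(1/2):ℂ) := by
    rw [hcp]
    field_simp
  simp only [Complex.GammaSeq]
  rw [div_div_div_comm, hXY, div_div_eq_mul_div, Finset.prod_div_distrib, mul_div_assoc]

lemma abs_ratio_pow {z : ℂ} (hz : 7/4 < z.re) {n : ℕ} (hn : n ≠ 0) :
    ‖Complex.GammaSeq (z+1/2) n / Complex.GammaSeq (z+1) n‖ ^ 4
      = ((n:ℝ)^2)⁻¹ * ∏ j ∈ range (n+1), ((vv z j)^2 / (uu z j)^2) := by
  have hnpos : (0:ℝ) < n := by exact_mod_cast Nat.pos_of_ne_zero hn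
  rw [ratio_eq hz hn, norm_mul]
  rw [norm_prod]
  have h1 : ‖(n:ℂ)^(-(1/2):ℂ)‖ = (n:ℝ) ^ ((-(1/2):ℂ).re) := by
    rw [show ((n:ℕ):ℂ) = (((n:ℕ):ℝ):ℂ) by push_cast; rfl]
    exact Complex.norm_cpow_eq_rpow_re_of_pos hnpos _
  rw [h1]
  rw [mul_pow, ← Finset.prod_pow]
  congr 1
  · have : ((-(1/2):ℂ).re) = (-(1/2):ℝ) := by simp
    rw [this, ← Real.rpow_natCast ((n:ℝ) ^ ((-(1/2)):ℝ)) 4, ← Real.rpow_mul hnpos.le]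
    norm_num
  · apply Finset.prod_congr rfl
    intro j _
    rw [norm_div]
    have hv : (‖z+1+j‖)^2 = vv z j := by
      rw [Complex.sq_norm, Complex.normSq_apply]
      simp only [Complex.add_re, Complex.add_im, Complex.natCast_re, Complex.natCast_im,
        Complex.one_re, Complex.one_im]
      simp [vv]; ring
    have hu : (‖z+1/2+j‖)^2 = uu z j := by
      rw [Complex.sq_norm, Complex.normSq_apply]
      simp only [Complex.add_re, Complex.add_im, Complex.natCast_re, Complex.natCast_im]
      simp [uu]; ring_nf
    rw [div_pow, show (4:ℕ) = 2*2 from rfl, pow_mul, pow_mul, hv, hu]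

lemma prod_split {z : ℂ} (hz : 7/4 < z.re) (m : ℕ) :
    ∏ j ∈ range m, (vv z j)^2/(uu z j)^2
      = (∏ j ∈ range m, (vv z j)^2/(uu z j * uu z (j+1))) * (uu z m / uu z 0) := by
  have h0 := (uu_pos hz 0).ne'
  induction m with
  | zero => simp [div_self h0]
  | succ m ih =>
    rw [Finset.prod_range_succ, Finset.prod_range_succ, ih]
    have h1 := (uu_pos hz m).ne'
    have h2 := (uu_pos hz (m+1)).ne'
    have hQ : (∏ x ∈ range m, (uu z x * uu z (x+1))) ≠ 0 :=
      (Finset.prod_pos fun x _ => mul_pos (uu_pos hz x) (uu_pos hz (x+1))).ne'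
    field_simp

lemma gamma_tendsto {z : ℂ} (hz : 7/4 < z.re) :
    Tendsto (fun n => ‖Complex.GammaSeq (z+1/2) n / Complex.GammaSeq (z+1) n‖ ^ 4)
      atTop (𝓝 (‖Complex.Gamma (z+1/2) / Complex.Gamma (z+1)‖ ^ 4)) := by
  have hΓ : Complex.Gamma (z+1) ≠ 0 := by
    apply Complex.Gamma_ne_zero
    intro m h
    have h2 := congrArg Complex.re h
    simp only [Complex.add_re, Complex.one_re, Complex.neg_re, Complex.natCast_re] at h2
    have : (0:ℝ) ≤ m := Nat.cast_nonneg m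
    linarith
  exact ((continuous_norm.tendsto _).comp
    (((Complex.GammaSeq_tendsto_Gamma (z+1/2)).div (Complex.GammaSeq_tendsto_Gamma (z+1)) hΓ))).pow 4

lemma coeff_tendsto (z : ℂ) :
    Tendsto (fun n : ℕ => uu z (n+1) / ((n:ℝ)^2)) atTop (𝓝 1) := by
  have h1 : Tendsto (fun n : ℕ => ((z.re+3/2)/(n:ℝ) + 1)^2 + (z.im/(n:ℝ))^2) atTop
      (𝓝 ((0+1)^2 + 0^2)) := by
    apply Tendsto.add
    · exact (((tendsto_const_div_atTop_nhds_zero_nat (z.re+3/2)).add tendsto_const_nhds)).pow 2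
    · exact (tendsto_const_div_atTop_nhds_zero_nat z.im).pow 2
  norm_num at h1
  apply h1.congr'
  filter_upwards [eventually_ge_atTop 1] with n hn
  have hn0 : ((n:ℝ)) ≠ 0 := by
    have : (1:ℝ) ≤ n := by exact_mod_cast hn
    linarith
  simp only [uu]
  push_cast
  field_simp
  ring

lemma L4_bounds {z : ℂ} (hz : 7/4 < z.re) :
    1/8 * (uu z 0)⁻¹ ≤ ‖Complex.Gamma (z+1/2) / Complex.Gamma (z+1)‖ ^ 4 ∧
    ‖Complex.Gamma (z+1/2) / Complex.Gamma (z+1)‖ ^ 4 ≤ 8 * (uu z 0)⁻¹ := by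
  have hu0 := uu_pos hz 0
  have hcoef : Tendsto (fun n : ℕ => uu z (n+1) / ((n:ℝ)^2) * (uu z 0)⁻¹) atTop
      (𝓝 ((uu z 0)⁻¹)) := by
    have := (coeff_tendsto z).mul_const ((uu z 0)⁻¹)
    simpa using this
  have hf := gamma_tendsto hz
  have hbound : ∀ n : ℕ, 1 ≤ n →
      1/8 * (uu z (n+1) / ((n:ℝ)^2) * (uu z 0)⁻¹)
        ≤ ‖Complex.GammaSeq (z+1/2) n / Complex.GammaSeq (z+1) n‖ ^ 4 ∧
      ‖Complex.GammaSeq (z+1/2) n / Complex.GammaSeq (z+1) n‖ ^ 4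
        ≤ 8 * (uu z (n+1) / ((n:ℝ)^2) * (uu z 0)⁻¹) := by
    intro n hn
    have hn' : n ≠ 0 := Nat.one_le_iff_ne_zero.1 hn
    rw [abs_ratio_pow hz hn', prod_split hz (n+1)]
    have hnpos : (0:ℝ) < (n:ℝ)^2 := by
      have : (0:ℝ) < n := by exact_mod_cast Nat.pos_of_ne_zero hn'
      positivity
    have hun1 := uu_pos hz (n+1)
    have hpos2 : 0 < uu z (n+1) / ((n:ℝ)^2) * (uu z 0)⁻¹ := by positivity
    constructor
    · calc 1/8 * (uu z (n+1) / ((n:ℝ)^2) * (uu z 0)⁻¹)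
          ≤ (∏ j ∈ range (n+1), (vv z j)^2/(uu z j * uu z (j+1)))
            * (uu z (n+1) / ((n:ℝ)^2) * (uu z 0)⁻¹) := by
            apply mul_le_mul_of_nonneg_right _ hpos2.le
            exact (prod_bounds hz _).1
        _ = ((n:ℝ)^2)⁻¹ * ((∏ j ∈ range (n+1), (vv z j)^2/(uu z j * uu z (j+1)))
            * (uu z (n+1) / uu z 0)) := by
            field_simp
    · calc ((n:ℝ)^2)⁻¹ * ((∏ j ∈ range (n+1), (vv z j)^2/(uu z j * uu z (j+1)))
            * (uu z (n+1) / uu z 0))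
          = (∏ j ∈ range (n+1), (vv z j)^2/(uu z j * uu z (j+1)))
            * (uu z (n+1) / ((n:ℝ)^2) * (uu z 0)⁻¹) := by
            field_simp
        _ ≤ 8 * (uu z (n+1) / ((n:ℝ)^2) * (uu z 0)⁻¹) := by
            apply mul_le_mul_of_nonneg_right _ hpos2.le
            exact (prod_bounds hz _).2
  constructor
  · refine le_of_tendsto_of_tendsto (hcoef.const_mul (1/8)) hf ?_
    filter_upwards [eventually_ge_atTop 1] with n hn
    exact (hbound n hn).1
  · refine le_of_tendsto_of_tendsto hf (hcoef.const_mul 8) ?_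
    filter_upwards [eventually_ge_atTop 1] with n hn
    exact (hbound n hn).2

lemma abs_z_big {z : ℂ} (hz : 7/4 < z.re) : 7/4 < ‖z‖ :=
  lt_of_lt_of_le hz (le_trans (le_abs_self z.re) (Complex.abs_re_le_norm z))

lemma rpow_pow_aux {r : ℝ} (hr : 0 < r) : (r ^ (-(1/2) : ℝ))^(4:ℕ) = (r^2)⁻¹ := by
  rw [← Real.rpow_natCast (r ^ (-(1/2):ℝ)) 4, ← Real.rpow_mul hr.le]
  norm_num

lemma gamma_ratio_bounds {z : ℂ} (hz : 7/4 < z.re) :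
    (1/3 : ℝ) * ‖z‖ ^ (-(1/2):ℝ)
      ≤ ‖Complex.Gamma (z+1/2) / Complex.Gamma (z+1)‖ ∧
    ‖Complex.Gamma (z+1/2) / Complex.Gamma (z+1)‖
      ≤ 2 * ‖z‖ ^ (-(1/2):ℝ) := by
  set L := ‖Complex.Gamma (z+1/2) / Complex.Gamma (z+1)‖ with hL
  set r := ‖z‖ with hr
  have hr0 : 0 < r := lt_trans (by norm_num) (abs_z_big hz)
  have hsq : r^2 = z.re^2 + z.im^2 := by
    rw [hr, Complex.sq_norm, Complex.normSq_apply]; ring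
  have huu : uu z 0 = (z.re + 1/2)^2 + z.im^2 := by simp [uu]
  have hu1 : r^2 ≤ uu z 0 := by rw [hsq, huu]; nlinarith
  have hu4 : uu z 0 ≤ 4 * r^2 := by rw [hsq, huu]; nlinarith [sq_nonneg z.im]
  have hu0 := uu_pos hz 0
  have hL4 := L4_bounds hz
  have hinv1 : (uu z 0)⁻¹ ≤ (r^2)⁻¹ := inv_anti₀ (by positivity) hu1
  have hinv4 : (4 * r^2)⁻¹ ≤ (uu z 0)⁻¹ := inv_anti₀ hu0 hu4
  have hLnn : 0 ≤ L := norm_nonneg _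
  have hrp : (0:ℝ) < r ^ (-(1/2):ℝ) := Real.rpow_pos_of_pos hr0 _
  have hkey := rpow_pow_aux hr0
  have hr2inv : (0:ℝ) < (r^2)⁻¹ := by positivity
  constructor
  · apply le_of_pow_le_pow_left₀ (n := 4) (by norm_num) hLnn
    calc ((1/3:ℝ) * r ^ (-(1/2):ℝ))^(4:ℕ) = (1/81) * (r^2)⁻¹ := by
          rw [mul_pow, hkey]; norm_num
      _ ≤ 1/8 * (uu z 0)⁻¹ := by
          calc (1/81:ℝ) * (r^2)⁻¹ ≤ 1/8 * (4*r^2)⁻¹ := by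
                rw [mul_inv]
                nlinarith
            _ ≤ 1/8 * (uu z 0)⁻¹ := by linarith
      _ ≤ L^4 := hL4.1
  · apply le_of_pow_le_pow_left₀ (n := 4) (by norm_num) (by positivity)
    calc L^(4:ℕ) ≤ 8 * (uu z 0)⁻¹ := hL4.2
      _ ≤ 8 * (r^2)⁻¹ := by linarith
      _ ≤ 16 * (r^2)⁻¹ := by linarith
      _ = ((2:ℝ) * r ^ (-(1/2):ℝ))^(4:ℕ) := by rw [mul_pow, hkey]; norm_num

lemma rat_bounds {z : ℂ} (hz : 7/4 < z.re) :
    (1/28 : ℝ) * ((‖z‖)^2)⁻¹ ≤ ‖(z-1)/(z*(2*z-1)*(2*z-3))‖ ∧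
    ‖(z-1)/(z*(2*z-1)*(2*z-3))‖ ≤ 5 * ((‖z‖)^2)⁻¹ := by
  set r := ‖z‖ with hr
  have hrb : 7/4 < r := abs_z_big hz
  have hr0 : (0:ℝ) < r := by linarith
  have h2z : ‖2*z‖ = 2*r := by
    rw [norm_mul, hr, Complex.norm_two]
  have hA1 : r - 1 ≤ ‖z - 1‖ := by
    have := norm_sub_norm_le z 1
    simpa using this
  have hA2 : ‖z - 1‖ ≤ r + 1 := by
    have := norm_add_le z (-1)
    simpa [sub_eq_add_neg] using this
  have hB1 : 2*r - 1 ≤ ‖2*z - 1‖ := by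
    have := norm_sub_norm_le (2*z) 1
    simpa [h2z] using this
  have hB2 : ‖2*z - 1‖ ≤ 2*r + 1 := by
    have := norm_add_le (2*z) (-1)
    simpa [sub_eq_add_neg, h2z] using this
  have hC1 : 2*r - 3 ≤ ‖2*z - 3‖ := by
    have := norm_sub_norm_le (2*z) 3
    simpa [h2z] using this
  have hC2 : ‖2*z - 3‖ ≤ 2*r + 3 := by
    have := norm_add_le (2*z) (-3)
    simpa [sub_eq_add_neg, h2z] using this
  set A := ‖z - 1‖
  set B := ‖2*z - 1‖
  set C := ‖2*z - 3‖
  have hApos : (0:ℝ) < A := by linarith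
  have hBpos : (0:ℝ) < B := by linarith
  have hCpos : (0:ℝ) < C := by linarith
  have hden : ‖z*(2*z-1)*(2*z-3)‖ = r * B * C := by
    rw [norm_mul, norm_mul]
  have habs : ‖(z-1)/(z*(2*z-1)*(2*z-3))‖ = A / (r * B * C) := by
    rw [norm_div, hden]
  have hdenpos : (0:ℝ) < r * B * C := by positivity
  rw [habs]
  constructor
  · rw [le_div_iff₀ hdenpos]
    calc (1/28:ℝ) * (r^2)⁻¹ * (r*B*C)
        ≤ (1/28:ℝ) * (r^2)⁻¹ * (r*(2*r+1)*(2*r+3)) := by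
          apply mul_le_mul_of_nonneg_left _ (by positivity)
          gcongr <;> linarith
      _ = (r*(2*r+1)*(2*r+3))/(28*r^2) := by ring
      _ ≤ r - 1 := by
          rw [div_le_iff₀ (by positivity)]
          nlinarith
      _ ≤ A := hA1
  · rw [div_le_iff₀ hdenpos]
    calc A ≤ r + 1 := hA2
      _ ≤ 5 * (r^2)⁻¹ * (r*(2*r-1)*(2*r-3)) := by
          rw [show 5 * (r^2)⁻¹ * (r*(2*r-1)*(2*r-3)) = (5*(r*(2*r-1)*(2*r-3)))/(r^2) by ring,
            le_div_iff₀ (by positivity)]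
          nlinarith [sq_nonneg (r - 7/4)]
      _ ≤ 5 * (r^2)⁻¹ * (r*B*C) := by
          apply mul_le_mul_of_nonneg_left _ (by positivity)
          gcongr <;> linarith

theorem W_size : ∃ c C : ℝ, 0 < c ∧ 0 < C ∧ ∀ z : ℂ, 7/4 < z.re →
    c * ‖z‖ ^ (-(5/2) : ℝ) ≤ ‖W z‖ ∧
    ‖W z‖ ≤ C * ‖z‖ ^ (-(5/2) : ℝ) := by
  have hπ : (0:ℝ) < Real.sqrt π := Real.sqrt_pos.2 Real.pi_pos
  refine ⟨9 * Real.sqrt π * (1/3) * (1/28), 9 * Real.sqrt π * 2 * 5, by positivity, by positivity,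
    fun z hz => ?_⟩
  set r := ‖z‖ with hr
  have hr0 : (0:ℝ) < r := lt_trans (by norm_num) (abs_z_big hz)
  obtain ⟨hg1, hg2⟩ := gamma_ratio_bounds hz
  obtain ⟨hq1, hq2⟩ := rat_bounds hz
  have hW : ‖W z‖ = (9 * Real.sqrt π)
      * ‖Complex.Gamma (z+1/2) / Complex.Gamma (z+1)‖
      * ‖(z-1)/(z*(2*z-1)*(2*z-3))‖ := by
    simp only [W, norm_mul, Complex.norm_real, Real.norm_eq_abs]
    rw [_root_.abs_of_nonneg (Real.sqrt_nonneg _)]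
    norm_num
  have hsplit : r ^ (-(5/2):ℝ) = r ^ (-(1/2):ℝ) * (r^2)⁻¹ := by
    have h2 : (r^2)⁻¹ = r ^ (-(2:ℝ)) := by
      rw [Real.rpow_neg hr0.le, show ((2:ℝ)) = ((2:ℕ):ℝ) by norm_num, Real.rpow_natCast]
    rw [h2, ← Real.rpow_add hr0]
    norm_num
  have hrp : (0:ℝ) ≤ r ^ (-(1/2):ℝ) := (Real.rpow_pos_of_pos hr0 _).le
  have hr2 : (0:ℝ) ≤ (r^2)⁻¹ := by positivity
  constructor
  · calc 9 * Real.sqrt π * (1/3) * (1/28) * r ^ (-(5/2):ℝ)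
        = (9 * Real.sqrt π) * ((1/3) * r ^ (-(1/2):ℝ)) * ((1/28) * (r^2)⁻¹) := by
          rw [hsplit]; ring
      _ ≤ (9 * Real.sqrt π)
          * ‖Complex.Gamma (z+1/2) / Complex.Gamma (z+1)‖
          * ‖(z-1)/(z*(2*z-1)*(2*z-3))‖ := by
          apply mul_le_mul
          · apply mul_le_mul_of_nonneg_left hg1 (by positivity)
          · exact hq1
          · positivity
          · positivity
      _ = ‖W z‖ := hW.symm
  · calc ‖W z‖
        = (9 * Real.sqrt π)
          * ‖Complex.Gamma (z+1/2) / Complex.Gamma (z+1)‖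
          * ‖(z-1)/(z*(2*z-1)*(2*z-3))‖ := hW
      _ ≤ (9 * Real.sqrt π) * (2 * r ^ (-(1/2):ℝ)) * (5 * (r^2)⁻¹) := by
          apply mul_le_mul
          · apply mul_le_mul_of_nonneg_left hg2 (by positivity)
          · exact hq2
          · exact norm_nonneg _
          · positivity
      _ = 9 * Real.sqrt π * 2 * 5 * r ^ (-(5/2):ℝ) := by
          rw [hsplit]; ring
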